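/- Let q be a prime power, let k, d be natural numbers, let e : F_q → ℂ be an additive character, let H be a finite-dimensional complex inner product space, and let φ : F_q^k × F_q^k → H. For c ∈ F_q^{d+1}, define ψ_c := Σ_{(x,y)} e(c · Z(x,y)) φ(x,y), and assume ‖ψ_c‖ ≤ 1 for all c. Let E_c (c ∈ F_q^{d+1}) be orthogonal projections on H with pairwise orthogonal ranges (E_c E_{c'} = 0 for c ≠ c'). Then Σ_{c ∈ F_q^{d+1}} Re⟨ψ_c, E_c ψ_c⟩ ≤ |R_k|; that is, the average success probability of identifying a uniformly random c from the state ψ_c is at most |R_k|/q^{d+1}. -/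

import Mathlib

open Finset in
private lemma aux_re_inner {H : Type*} [NormedAddCommGroup H] [InnerProductSpace ℂ H]
    [FiniteDimensional ℂ H] (A : H →L[ℂ] H) (hid : A.comp A = A) (hsa : IsSelfAdjoint A)
    (w : H) : (inner ℂ w (A w) : ℂ).re = ‖A w‖ ^ 2 := by
  have h1 : (inner ℂ w (A w) : ℂ) = inner ℂ (A w) (A w) := by
    conv_lhs => rw [← hid, ContinuousLinearMap.comp_apply,
      ← ContinuousLinearMap.adjoint_inner_left, ContinuousLinearMap.isSelfAdjoint_iff'.mp hsa]
  rw [h1, inner_self_eq_norm_sq_to_K]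
  simp [← Complex.ofReal_pow]

open Finset in
private lemma aux_proj_sum {H : Type*} [NormedAddCommGroup H] [InnerProductSpace ℂ H]
    [FiniteDimensional ℂ H] {ι : Type*} [Fintype ι] [DecidableEq ι]
    (E : ι → H →L[ℂ] H) (hidem : ∀ c, (E c).comp (E c) = E c)
    (hsa : ∀ c, IsSelfAdjoint (E c))
    (horth : ∀ c c', c ≠ c' → (E c).comp (E c') = 0)
    (v : H) : ∑ c, ‖E c v‖ ^ 2 ≤ ‖v‖ ^ 2 := by
  set P : H →L[ℂ] H := ∑ c, E c with hP
  have hPid : P.comp P = P := by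
    rw [hP, ContinuousLinearMap.finset_sum_comp]
    simp_rw [ContinuousLinearMap.comp_finset_sum]
    rw [Finset.sum_congr rfl (fun c _ => Finset.sum_eq_single_of_mem c (mem_univ c)
      (fun c' _ hne => horth c c' (Ne.symm hne)))]
    exact Finset.sum_congr rfl fun c _ => hidem c
  have hPsa : IsSelfAdjoint P := by
    rw [hP, IsSelfAdjoint, star_sum]
    exact Finset.sum_congr rfl fun c _ => hsa c
  have key : ∑ c, ‖E c v‖ ^ 2 = ‖P v‖ ^ 2 := by
    rw [← aux_re_inner P hPid hPsa v, hP]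
    simp only [ContinuousLinearMap.sum_apply, inner_sum, Complex.re_sum]
    exact Finset.sum_congr rfl fun c _ => (aux_re_inner (E c) (hidem c) (hsa c) v).symm
  rw [key]
  have h2 : ‖P v‖ ^ 2 ≤ ‖v‖ * ‖P v‖ := by
    rw [← aux_re_inner P hPid hPsa v]
    calc (inner ℂ v (P v) : ℂ).re ≤ ‖(inner ℂ v (P v) : ℂ)‖ := Complex.re_le_norm _
    _ ≤ ‖v‖ * ‖P v‖ := norm_inner_le_norm v (P v)
  nlinarith [norm_nonneg (P v), norm_nonneg v]

private lemma aux_norm_one {F : Type*} [Field F] [Fintype F] (e : F → ℂ)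
    (he : ∀ a b, e (a + b) = e a * e b) (h0 : e 0 = 1) (a : F) : ‖e a‖ = 1 := by
  have key : ∀ n : ℕ, e (n • a) = e a ^ n := by
    intro n
    induction n with
    | zero => simpa using h0
    | succ n ih => rw [succ_nsmul, he, ih, pow_succ]
  have hp : e a ^ ringChar F = 1 := by
    rw [← key, nsmul_eq_mul, ringChar.Nat.cast_ringChar, zero_mul, h0]
  exact Complex.norm_eq_one_of_pow_eq_one hp (CharP.char_ne_zero_of_finite F (ringChar F))

private lemma aux_conj {F : Type*} [Field F] [Fintype F] (e : F → ℂ)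
    (he : ∀ a b, e (a + b) = e a * e b) (h0 : e 0 = 1) (a : F) :
    (starRingEnd ℂ) (e a) = e (-a) := by
  have h1 : e a * e (-a) = 1 := by rw [← he]; simp [h0]
  have h2 : e a * (starRingEnd ℂ) (e a) = 1 := by
    rw [Complex.mul_conj, Complex.normSq_eq_norm_sq,
      aux_norm_one e he h0 a]
    norm_num
  have ha : e a ≠ 0 := fun h => by simp [h] at h1
  exact mul_left_cancel₀ ha (h2.trans h1.symm)

open Finset in
private lemma aux_sum_zero {F ι : Type*} [Field F] [Fintype F] [Fintype ι] [DecidableEq ι]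
    (e : F → ℂ) (he : ∀ a b, e (a + b) = e a * e b) (h0 : e 0 = 1)
    (a₀ : F) (ha₀ : e a₀ ≠ 1) (w : ι → F) (hw : w ≠ 0) :
    ∑ c : ι → F, e (∑ j, c j * w j) = 0 := by
  obtain ⟨j₀, hj₀⟩ : ∃ j, w j ≠ 0 := by
    by_contra h; push_neg at h; exact hw (funext h)
  classical
  set c₀ : ι → F := fun j => if j = j₀ then a₀ / w j₀ else 0 with hc₀
  have hdot : ∑ j, c₀ j * w j = a₀ := by
    rw [hc₀]
    simp only [ite_mul, zero_mul]
    simp [div_mul_cancel₀ _ hj₀]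
  have hshift : ∑ c : ι → F, e (∑ j, (c + c₀) j * w j) = ∑ c : ι → F, e (∑ j, c j * w j) :=
    Fintype.sum_equiv (Equiv.addRight c₀) _ _ (fun c => rfl)
  have hexp : ∀ c : ι → F, e (∑ j, (c + c₀) j * w j) = e (∑ j, c j * w j) * e a₀ := by
    intro c
    rw [← he, ← hdot, ← Finset.sum_add_distrib]
    simp [add_mul]
  rw [Finset.sum_congr rfl (fun c _ => hexp c), ← Finset.sum_mul] at hshift
  by_contra hS
  exact ha₀ (mul_left_cancel₀ hS (by rw [hshift, mul_one]))
open Finset in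
private lemma aux_main {F : Type*} [Field F] [Fintype F]
    {ι X : Type*} [Fintype ι] [DecidableEq ι] [DecidableEq (ι → F)] [Fintype X] [Nonempty X]
    (e : F → ℂ) (he : ∀ a b, e (a + b) = e a * e b)
    {H : Type*} [NormedAddCommGroup H] [InnerProductSpace ℂ H] [FiniteDimensional ℂ H]
    (φ : X → H) (Z : X → ι → F) (ψ : (ι → F) → H)
    (hψdef : ∀ c, ψ c = ∑ x, e (∑ j, c j * Z x j) • φ x)
    (hψ : ∀ c, ‖ψ c‖ ≤ 1)
    (E : (ι → F) → H →L[ℂ] H)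
    (hidem : ∀ c, (E c).comp (E c) = E c)
    (hsa : ∀ c, IsSelfAdjoint (E c))
    (horth : ∀ c c', c ≠ c' → (E c).comp (E c') = 0) :
    ∑ c : ι → F, (inner ℂ (ψ c) (E c (ψ c)) : ℂ).re ≤ ((univ.image Z).card : ℝ) := by
  classical
  have hLHS : ∑ c : ι → F, (inner ℂ (ψ c) (E c (ψ c)) : ℂ).re
      = ∑ c : ι → F, ‖E c (ψ c)‖ ^ 2 :=
    Finset.sum_congr rfl fun c _ => aux_re_inner (E c) (hidem c) (hsa c) (ψ c)
  have hRne : (univ.image Z).Nonempty := univ_nonempty.image Z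
  have hRpos : (1 : ℝ) ≤ ((univ.image Z).card : ℝ) := by
    exact_mod_cast Finset.card_pos.mpr hRne
  have h01 : e 0 = 0 ∨ e 0 = 1 := by
    have h00 : e 0 * e 0 = e 0 := by rw [← he, add_zero]
    rcases mul_eq_zero.mp (show e 0 * (e 0 - 1) = 0 by
      rw [mul_sub, h00, mul_one, sub_self]) with h | h
    · exact Or.inl h
    · exact Or.inr (sub_eq_zero.mp h)
  rcases h01 with h0 | h0
  · have hez : ∀ a, e a = 0 := fun a => by rw [← add_zero a, he, h0, mul_zero]
    have hz : ∀ c : ι → F, ψ c = 0 := fun c => by simp [hψdef, hez]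
    rw [hLHS]
    refine le_trans (le_of_eq (Finset.sum_eq_zero fun c _ => by simp [hz c])) ?_
    linarith
  by_cases htriv : ∀ a, e a = 1
  · have hw : ∀ c : ι → F, ψ c = ∑ x, φ x := fun c => by simp [hψdef, htriv]
    rw [hLHS]
    calc ∑ c : ι → F, ‖E c (ψ c)‖ ^ 2
        = ∑ c : ι → F, ‖E c (∑ x, φ x)‖ ^ 2 :=
          Finset.sum_congr rfl fun c _ => by rw [hw c]
      _ ≤ ‖∑ x : X, φ x‖ ^ 2 := aux_proj_sum E hidem hsa horth _
      _ ≤ 1 := by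
          have h1 := hψ (Classical.arbitrary _)
          rw [hw] at h1
          nlinarith [norm_nonneg (∑ x : X, φ x)]
      _ ≤ _ := hRpos
  push_neg at htriv
  obtain ⟨a₀, ha₀⟩ := htriv
  set R : Finset (ι → F) := univ.image Z with hR
  set v : (ι → F) → H := fun z => ∑ x ∈ univ.filter (fun x => Z x = z), φ x with hv
  have hdecomp : ∀ c : ι → F, ψ c = ∑ z ∈ R, e (∑ j, c j * z j) • v z := by
    intro c
    rw [hψdef, ← Finset.sum_fiberwise_of_maps_to
      (fun x _ => mem_image_of_mem Z (mem_univ x)) (fun x => e (∑ j, c j * Z x j) • φ x)]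
    refine Finset.sum_congr rfl fun z _ => ?_
    rw [hv, Finset.smul_sum]
    refine Finset.sum_congr rfl fun x hx => ?_
    rw [(Finset.mem_filter.mp hx).2]
  have horthchar : ∀ z z' : ι → F, z ≠ z' →
      ∑ c : ι → F, (starRingEnd ℂ) (e (∑ j, c j * z j)) * e (∑ j, c j * z' j) = 0 := by
    intro z z' hne
    have heq : ∀ c : ι → F,
        (starRingEnd ℂ) (e (∑ j, c j * z j)) * e (∑ j, c j * z' j)
          = e (∑ j, c j * (z' - z) j) := by
      intro c
      rw [aux_conj e he h0, ← he]
      congr 1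
      rw [neg_add_eq_sub, ← Finset.sum_sub_distrib]
      exact Finset.sum_congr rfl fun j _ => by simp [mul_sub]
    rw [Finset.sum_congr rfl fun c _ => heq c]
    exact aux_sum_zero e he h0 a₀ ha₀ _ (sub_ne_zero.mpr (fun h => hne (by
      have := congrArg (· + z) h
      simpa using this.symm)))
  have hdiag : ∀ z : ι → F,
      ∑ c : ι → F, (starRingEnd ℂ) (e (∑ j, c j * z j)) * e (∑ j, c j * z j)
        = (Fintype.card (ι → F) : ℂ) := by
    intro z
    have h1 : ∀ c : ι → F,
        (starRingEnd ℂ) (e (∑ j, c j * z j)) * e (∑ j, c j * z j) = 1 := by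
      intro c
      rw [Complex.conj_mul', aux_norm_one e he h0]
      norm_num
    rw [Finset.sum_congr rfl fun c _ => h1 c, Finset.sum_const, Finset.card_univ,
      nsmul_eq_mul, mul_one]
  have hsumC : ∑ c : ι → F, (inner ℂ (ψ c) (ψ c) : ℂ)
      = (Fintype.card (ι → F) : ℂ) * ∑ z ∈ R, (inner ℂ (v z) (v z) : ℂ) := by
    have hinner : ∀ c : ι → F, (inner ℂ (ψ c) (ψ c) : ℂ)
        = ∑ z ∈ R, ∑ z' ∈ R,
            (starRingEnd ℂ) (e (∑ j, c j * z j)) * e (∑ j, c j * z' j)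
              * (inner ℂ (v z) (v z') : ℂ) := by
      intro c
      rw [hdecomp c, sum_inner]
      refine Finset.sum_congr rfl fun z _ => ?_
      rw [inner_sum]
      exact Finset.sum_congr rfl fun z' _ => by
        rw [inner_smul_left, inner_smul_right]; ring
    rw [Finset.sum_congr rfl fun c _ => hinner c, Finset.sum_comm, Finset.mul_sum]
    refine Finset.sum_congr rfl fun z hz => ?_
    rw [Finset.sum_comm]
    rw [Finset.sum_eq_single_of_mem z hz (fun z' _ hne => ?_)]
    · rw [← Finset.sum_mul, hdiag z]
    · rw [← Finset.sum_mul, horthchar z z' (Ne.symm hne), zero_mul]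
  have hv1 : ∑ z ∈ R, ‖v z‖ ^ 2 ≤ 1 := by
    have hre := congrArg Complex.re hsumC
    have hcard : (0:ℝ) < (Fintype.card (ι → F) : ℝ) := by
      exact_mod_cast Fintype.card_pos
    have hL : (∑ c : ι → F, (inner ℂ (ψ c) (ψ c) : ℂ)).re = ∑ c : ι → F, ‖ψ c‖ ^ 2 := by
      rw [Complex.re_sum]
      exact Finset.sum_congr rfl fun c _ => by
        simpa using inner_self_eq_norm_sq (𝕜 := ℂ) (ψ c)
    have hRr : ∑ z ∈ R, (inner ℂ (v z) (v z) : ℂ) = ((∑ z ∈ R, ‖v z‖ ^ 2 : ℝ) : ℂ) := by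
      push_cast
      exact Finset.sum_congr rfl fun z _ => by
        rw [inner_self_eq_norm_sq_to_K]; norm_cast
    rw [hL, hRr, ← Complex.ofReal_natCast, ← Complex.ofReal_mul, Complex.ofReal_re] at hre
    have hb : ∑ c : ι → F, ‖ψ c‖ ^ 2 ≤ (Fintype.card (ι → F) : ℝ) := by
      calc ∑ c : ι → F, ‖ψ c‖ ^ 2 ≤ ∑ _c : ι → F, (1:ℝ) :=
            Finset.sum_le_sum fun c _ => by nlinarith [hψ c, norm_nonneg (ψ c)]
        _ = _ := by simp
    nlinarith
  rw [hLHS]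
  calc ∑ c : ι → F, ‖E c (ψ c)‖ ^ 2
      ≤ ∑ _c : ι → F, ((R.card : ℝ) * ∑ z ∈ R, ‖E (_c) (v z)‖ ^ 2) := by
        refine Finset.sum_le_sum fun c _ => ?_
        have hEc : E c (ψ c) = ∑ z ∈ R, e (∑ j, c j * z j) • E c (v z) := by
          rw [hdecomp c, map_sum]
          exact Finset.sum_congr rfl fun z _ => (E c).map_smul _ _
        have h1 : ‖E c (ψ c)‖ ≤ ∑ z ∈ R, ‖E c (v z)‖ := by
          rw [hEc]
          refine (norm_sum_le _ _).trans (le_of_eq ?_)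
          exact Finset.sum_congr rfl fun z _ => by
            rw [norm_smul, aux_norm_one e he h0, one_mul]
        calc ‖E c (ψ c)‖ ^ 2 ≤ (∑ z ∈ R, ‖E c (v z)‖) ^ 2 :=
              pow_le_pow_left₀ (norm_nonneg _) h1 2
          _ ≤ (R.card : ℝ) * ∑ z ∈ R, ‖E c (v z)‖ ^ 2 :=
              sq_sum_le_card_mul_sum_sq
    _ = (R.card : ℝ) * ∑ z ∈ R, ∑ c : ι → F, ‖E c (v z)‖ ^ 2 := by
        rw [← Finset.mul_sum, Finset.sum_comm]
    _ ≤ (R.card : ℝ) * ∑ z ∈ R, ‖v z‖ ^ 2 :=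
        mul_le_mul_of_nonneg_left
          (Finset.sum_le_sum fun z _ => aux_proj_sum E hidem hsa horth (v z))
          (by positivity)
    _ ≤ (R.card : ℝ) * 1 := mul_le_mul_of_nonneg_left hv1 (by positivity)
    _ = (R.card : ℝ) := mul_one _



/-- Let `q` be a prime power (`F` the finite field with `q` elements),
`k, d` natural numbers, `e : F → ℂ` an additive character, `H` a finite-dimensional
complex inner ℂ product space, and `φ : F^k × F^k → H`.  For `c ∈ F^{d+1}` define
`ψ_c := Σ_{(x,y)} e(c · Z(x,y)) φ(x,y)` and assume `‖ψ_c‖ ≤ 1` for all `c`.  Let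
`E_c` be orthogonal projections with pairwise orthogonal ranges.  Then
`Σ_c Re⟨ψ_c, E_c ψ_c⟩ ≤ |R_k|`. -/
theorem stmt_9 (F : Type*) [Field F] [Fintype F] (k d : ℕ)
    (e : F → ℂ) (he : ∀ a b, e (a + b) = e a * e b)
    (H : Type*) [NormedAddCommGroup H] [InnerProductSpace ℂ H]
    [FiniteDimensional ℂ H]
    (φ : (Fin k → F) × (Fin k → F) → H)
    (ψ : (Fin (d + 1) → F) → H)
    (hψdef : ∀ c, ψ c = ∑ xy : (Fin k → F) × (Fin k → F),
        e (∑ j : Fin (d + 1), c j * (∑ i, xy.2 i * xy.1 i ^ (j : ℕ))) • φ xy)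
    (hψ : ∀ c, ‖ψ c‖ ≤ 1)
    (E : (Fin (d + 1) → F) → H →L[ℂ] H)
    (hidem : ∀ c, (E c).comp (E c) = E c)
    (hsa : ∀ c, IsSelfAdjoint (E c))
    (horth : ∀ c c', c ≠ c' → (E c).comp (E c') = 0) :
    ∑ c : Fin (d + 1) → F, (inner ℂ (ψ c) (E c (ψ c)) : ℂ).re ≤
      ((Set.range (fun xy : (Fin k → F) × (Fin k → F) =>
        fun j : Fin (d + 1) => ∑ i, xy.2 i * xy.1 i ^ (j : ℕ))).ncard : ℝ) := by
  classical
  have key := aux_main (ι := Fin (d + 1)) (X := (Fin k → F) × (Fin k → F))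
    e he φ (fun xy j => ∑ i, xy.2 i * xy.1 i ^ (j : ℕ)) ψ hψdef hψ E hidem hsa horth
  have hrange : Set.range (fun xy : (Fin k → F) × (Fin k → F) =>
      fun j : Fin (d + 1) => ∑ i, xy.2 i * xy.1 i ^ (j : ℕ))
      = ↑(Finset.univ.image (fun xy : (Fin k → F) × (Fin k → F) =>
        fun j : Fin (d + 1) => ∑ i, xy.2 i * xy.1 i ^ (j : ℕ))) := by
    rw [Finset.coe_image, Finset.coe_univ, Set.image_univ]
  rw [hrange, Set.ncard_coe_finset]
  exact key
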